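/- (Theorem 1.) Let M ≥ 2, N ≥ 1 be integers, K, P > 0 real numbers, 0 ≤ m ≤ M−1, and set α = KP/(N²(M−1)) and F̄ = √α·Q̄_m ∈ ℂ^{MN×(M−1)N}, where Q̄_m is the NM-point DFT matrix with the N columns indexed {m+nM : 0 ≤ n ≤ N−1} removed. Then: (i) for every 1 ≤ i ≤ M, Tr(S_i F̄ F̄^H S_i^T) = KP; and (ii) with μ = N(M−1+β)/(1+NMα)² > 0, where β = (2Nα(1+Nα) + N²α²(M−1))/(1+Nα)², one has −2N·Σ_{i=1}^{M} S̄_(i)^T (I_{(M−1)N} + S̄_(i) F̄ F̄^H S̄_(i)^T)^{−2} S̄_(i) F̄ + 2μ·Σ_{i=1}^{M} S_i^T S_i F̄ = 0. (These are the KKT conditions showing F̄ is a stationary point of the sum-MSE pilot design problem in the symmetric isotropic case with unit noise variance: the gradient of J_M = N·Σ_i Tr((I + S̄_(i) F̄ F̄^H S̄_(i)^T)^{−1}) plus the Lagrange term vanishes, all power constraints hold with equality, and all multipliers are positive.) -/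

import Mathlib

open Matrix Kronecker

/-- The matrix `I_{M,i} ∈ ℂ^{(M-1)×M}`: the identity matrix `I_M` with its `i`-th row
removed. -/
noncomputable def rowRemoved (M : ℕ) (i : Fin M) : Matrix (Fin (M - 1)) (Fin M) ℂ :=
  Matrix.of fun j k =>
    if (k : ℕ) = (if (j : ℕ) < (i : ℕ) then (j : ℕ) else (j : ℕ) + 1) then 1 else 0

/-- `S̄_(i) = I_{M,i} ⊗ I_N`. -/
noncomputable def sBar (M N : ℕ) (i : Fin M) :
    Matrix (Fin (M - 1) × Fin N) (Fin M × Fin N) ℂ :=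
  rowRemoved M i ⊗ₖ (1 : Matrix (Fin N) (Fin N) ℂ)

/-- `S_i = e_iᵀ ⊗ I_N ∈ ℂ^{N × MN}`, the selection matrix of user `i`. -/
noncomputable def sSel (M N : ℕ) (i : Fin M) : Matrix (Fin N) (Fin M × Fin N) ℂ :=
  Matrix.of fun b jc => if jc.1 = i ∧ jc.2 = b then 1 else 0

noncomputable def ee (n : ℕ) (t : ℤ) : ℂ :=
  Complex.exp (2 * Real.pi * Complex.I * t / n)

lemma ee_add (n : ℕ) (a b : ℤ) : ee n (a + b) = ee n a * ee n b := by
  rw [ee, ee, ee, ← Complex.exp_add]; congr 1; push_cast; ring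

lemma ee_zero (n : ℕ) : ee n 0 = 1 := by simp [ee]

lemma ee_mul_n (n : ℕ) (hn : 0 < n) (c : ℤ) : ee n (c * n) = 1 := by
  rw [ee]
  have hn' : (n : ℂ) ≠ 0 := by exact_mod_cast hn.ne'
  have h : 2 * (Real.pi:ℂ) * Complex.I * ((c * (n:ℤ) : ℤ) : ℂ) / (n:ℂ)
      = c * (2 * Real.pi * Complex.I) := by
    push_cast; field_simp
  rw [h, Complex.exp_int_mul_two_pi_mul_I]

lemma ee_pow (n : ℕ) (d : ℤ) (k : ℕ) : ee n (d * k) = (ee n d) ^ k := by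
  rw [ee, ee, ← Complex.exp_nat_mul]; congr 1; push_cast; ring

lemma ee_eq_one_iff (n : ℕ) (hn : 0 < n) (d : ℤ) : ee n d = 1 ↔ (n:ℤ) ∣ d := by
  rw [ee, Complex.exp_eq_one_iff]
  have hn' : (n : ℂ) ≠ 0 := by exact_mod_cast hn.ne'
  have hpi : (Real.pi:ℂ) ≠ 0 := by exact_mod_cast Real.pi_ne_zero
  have h2 : (2:ℂ) * Real.pi * Complex.I ≠ 0 := by
    simp [Complex.I_ne_zero, hpi, Complex.ext_iff]
  constructor
  · rintro ⟨c, hc⟩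
    refine ⟨c, ?_⟩
    have hd : (d : ℂ) = n * c := by
      field_simp at hc
      exact mul_left_cancel₀ h2 (show (2:ℂ)*Real.pi*Complex.I * (d:ℂ)
          = (2:ℂ)*Real.pi*Complex.I * ((n:ℂ)*c) by linear_combination (2*(Real.pi:ℂ)*Complex.I) * hc)
    exact_mod_cast hd
  · rintro ⟨c, rfl⟩
    refine ⟨c, ?_⟩
    push_cast
    field_simp

lemma ee_sum (n : ℕ) (hn : 0 < n) (d : ℤ) :
    ∑ k : Fin n, ee n (d * k) = if (n:ℤ) ∣ d then (n:ℂ) else 0 := by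
  by_cases h : (n:ℤ) ∣ d
  · simp only [h, if_true]
    have h1 : ee n d = 1 := (ee_eq_one_iff n hn d).2 h
    have h3 : ∀ k : Fin n, ee n (d * k) = 1 := fun k => by rw [ee_pow, h1, one_pow]
    simp [h3]
  · simp only [h, if_false]
    have h1 : ee n d ≠ 1 := fun hh => h ((ee_eq_one_iff n hn d).1 hh)
    have h2 : (ee n d) ^ n = 1 := by rw [← ee_pow]; exact ee_mul_n n hn d
    calc ∑ k : Fin n, ee n (d * k) = ∑ k : Fin n, (ee n d) ^ (k:ℕ) := by simp [ee_pow]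
      _ = ∑ k ∈ Finset.range n, (ee n d) ^ k := by rw [Fin.sum_univ_eq_sum_range]
      _ = ((ee n d) ^ n - 1) / (ee n d - 1) := geom_sum_eq h1 n
      _ = 0 := by rw [h2]; simp

lemma ee_conj (n : ℕ) (t : ℤ) : (starRingEnd ℂ) (ee n t) = ee n (-t) := by
  rw [ee, ee, ← Complex.exp_conj]
  congr 1
  simp [map_div₀, Complex.conj_I, map_ofNat]

lemma ee_scale (a b : ℕ) (ha : 0 < a) (hb : 0 < b) (t : ℤ) : ee (a*b) (t*b) = ee a t := by
  have ha' : (a : ℂ) ≠ 0 := by exact_mod_cast ha.ne'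
  have hb' : (b : ℂ) ≠ 0 := by exact_mod_cast hb.ne'
  rw [ee, ee]
  congr 1
  push_cast
  field_simp

lemma int_dvd_small (n : ℕ) (x : ℤ) (hn : 0 < n) (hd : (n:ℤ) ∣ x)
    (h1 : -(n:ℤ) < x) (h2 : x < n) : x = 0 := by
  obtain ⟨c, rfl⟩ := hd
  have hn' : (0:ℤ) < n := by exact_mod_cast hn
  have hc1 : c < 1 := by nlinarith
  have hc2 : -1 < c := by nlinarith
  have : c = 0 := by omega
  simp [this]

lemma sum_split (N M m : ℕ) (hN : 1 ≤ N) (hM : 2 ≤ M) (hm : m ≤ M - 1)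
    (g : Fin (N*M) → ℂ) :
    ∑ k : {k : Fin (N * M) // ∀ n : Fin N, (k : ℕ) ≠ m + (n : ℕ) * M}, g k
      = ∑ k : Fin (N*M), g k
        - ∑ n : Fin N, g ⟨m + (n:ℕ) * M, by
            have h1 : ((n:ℕ)+1) * M ≤ N * M := Nat.mul_le_mul_right M n.isLt
            have h2 : ((n:ℕ)+1) * M = (n:ℕ)*M + M := by ring
            omega⟩ := by
  classical
  set p : Fin (N*M) → Prop := fun k => ∀ n : Fin N, (k : ℕ) ≠ m + (n : ℕ) * M with hp
  have hbound : ∀ n : Fin N, m + (n:ℕ) * M < N * M := by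
    intro n
    have h1 : ((n:ℕ)+1) * M ≤ N * M := Nat.mul_le_mul_right M n.isLt
    have h2 : ((n:ℕ)+1) * M = (n:ℕ)*M + M := by ring
    omega
  set r : Fin N → Fin (N*M) := fun n => ⟨m + (n:ℕ) * M, hbound n⟩ with hr
  have hrinj : Function.Injective r := by
    intro a b h
    have h' := congrArg Fin.val h
    simp only [hr] at h'
    have : (a:ℕ) * M = (b:ℕ) * M := by omega
    exact Fin.ext (Nat.eq_of_mul_eq_mul_right (by omega) this)
  have himg : Finset.univ.filter (fun k => ¬ p k) = Finset.image r Finset.univ := by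
    ext k
    simp only [Finset.mem_filter, Finset.mem_univ, true_and, Finset.mem_image, hp]
    push_neg
    constructor
    · rintro ⟨n, hn⟩
      exact ⟨n, Fin.ext hn.symm⟩
    · rintro ⟨n, hn⟩
      exact ⟨n, (congrArg Fin.val hn).symm⟩
  have h2 : ∑ k : {k : Fin (N*M) // p k}, g k
      = ∑ k ∈ Finset.univ.filter p, g k := (Finset.sum_subtype _ (by simp) g).symm
  have h3 : ∑ k ∈ Finset.univ.filter (fun k => ¬ p k), g k = ∑ n : Fin N, g (r n) := by
    rw [himg, Finset.sum_image (fun a _ b _ h => hrinj h)]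
  have h4 := Finset.sum_filter_add_sum_filter_not Finset.univ p g
  rw [h2, ← h4, h3]
  ring

/-- the embedding `Fin (M-1) → Fin M` skipping `i`. -/
def embF (M : ℕ) (i : Fin M) (j : Fin (M - 1)) : Fin M :=
  ⟨if (j : ℕ) < (i : ℕ) then (j : ℕ) else (j : ℕ) + 1, by
    have := j.isLt; have := i.isLt; split <;> omega⟩

lemma embF_inj {M : ℕ} (i : Fin M) : Function.Injective (embF M i) := by
  intro a b h
  have h' := congrArg Fin.val h
  simp only [embF] at h'
  exact Fin.ext (by split_ifs at h' <;> omega)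

lemma embF_ne {M : ℕ} (i : Fin M) (j : Fin (M - 1)) : embF M i j ≠ i := by
  intro h
  have h' := congrArg Fin.val h
  simp only [embF] at h'
  split_ifs at h' <;> omega

lemma embF_surj {M : ℕ} (i : Fin M) (k : Fin M) (hk : k ≠ i) :
    ∃ j, embF M i j = k := by
  have hki : (k:ℕ) ≠ (i:ℕ) := fun h => hk (Fin.ext h)
  have hiM := i.isLt; have hkM := k.isLt
  by_cases h : (k:ℕ) < (i:ℕ)
  · exact ⟨⟨k, by omega⟩, Fin.ext (by simp [embF]; omega)⟩
  · exact ⟨⟨(k:ℕ) - 1, by omega⟩, Fin.ext (by simp only [embF]; split <;> omega)⟩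

lemma rowRemoved_apply (M : ℕ) (i : Fin M) (j : Fin (M - 1)) (k : Fin M) :
    rowRemoved M i j k = if k = embF M i j then 1 else 0 := by
  simp only [rowRemoved, embF, of_apply, Fin.ext_iff]

lemma Rrm_mul {M : ℕ} {n : Type*} [Fintype n] (i : Fin M) (X : Matrix (Fin M) n ℂ) :
    rowRemoved M i * X = Matrix.of fun j c => X (embF M i j) c := by
  ext j c
  simp [mul_apply, rowRemoved_apply]

lemma mul_Rrt {M : ℕ} {n : Type*} [Fintype n] (i : Fin M) (X : Matrix n (Fin M) ℂ) :
    X * (rowRemoved M i)ᵀ = Matrix.of fun c j => X c (embF M i j) := by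
  ext c j
  simp [mul_apply, rowRemoved_apply, transpose_apply]

/-- `E_ii` -/
noncomputable def Em {M : ℕ} (i : Fin M) : Matrix (Fin M) (Fin M) ℂ :=
  Matrix.of fun a b => if a = i ∧ b = i then 1 else 0

lemma Rt_mul_R {M : ℕ} (i : Fin M) :
    (rowRemoved M i)ᵀ * rowRemoved M i = 1 - Em i := by
  ext k k'
  simp only [mul_apply, transpose_apply, rowRemoved_apply, Matrix.sub_apply, one_apply, Em, of_apply]
  by_cases hkk : k = k'
  · subst hkk
    by_cases hki : k = i
    · subst hki
      rw [Finset.sum_eq_zero]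
      · simp
      · intro j _
        simp [Ne.symm (embF_ne _ j)]
    · obtain ⟨j₀, hj₀⟩ := embF_surj i k hki
      rw [Finset.sum_eq_single j₀]
      · simp [hj₀, hki]
      · intro j _ hj
        have : k ≠ embF M i j := by
          rw [← hj₀]; exact fun h => hj (embF_inj i h.symm)
        simp [this]
      · simp
  · have hne : ¬(k = i ∧ k' = i) := fun ⟨h1, h2⟩ => hkk (h1.trans h2.symm)
    rw [Finset.sum_eq_zero]
    · simp [hkk, hne]
    · intro j _
      by_cases h : k = embF M i j
      · have : k' ≠ embF M i j := fun h' => hkk (h.trans h'.symm)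
        simp [this]
      · simp [h]

lemma R_mul_Rt {M : ℕ} (i : Fin M) :
    rowRemoved M i * (rowRemoved M i)ᵀ = 1 := by
  ext j j'
  rw [Rrm_mul]
  simp only [of_apply, transpose_apply, rowRemoved_apply, one_apply]
  by_cases h : j' = j
  · simp [h]
  · have : embF M i j ≠ embF M i j' := fun hh => h ((embF_inj i hh).symm)
    simp [this, Ne.symm h]

lemma sum_Em (M : ℕ) : ∑ i : Fin M, Em i = (1 : Matrix (Fin M) (Fin M) ℂ) := by
  ext a b
  simp only [Matrix.sum_apply, Em, of_apply, one_apply]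
  by_cases h : a = b
  · subst h
    rw [Finset.sum_eq_single a] <;> simp +contextual [eq_comm]
  · rw [Finset.sum_eq_zero]
    · simp [h]
    · intro i _
      have : ¬(a = i ∧ b = i) := fun ⟨h1, h2⟩ => h (h1.trans h2.symm)
      simp [this]

lemma Em_mul {M : ℕ} {n : Type*} [Fintype n] (i : Fin M) (X : Matrix (Fin M) n ℂ) :
    Em i * X = Matrix.of fun a c => if a = i then X i c else 0 := by
  ext a c
  simp only [mul_apply, Em, of_apply]
  by_cases h : a = i
  · subst h
    rw [Finset.sum_eq_single a] <;> simp +contextual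
  · rw [Finset.sum_eq_zero] <;> simp +contextual [h]

lemma mul_Em {M : ℕ} {n : Type*} [Fintype n] (i : Fin M) (X : Matrix n (Fin M) ℂ) :
    X * Em i = Matrix.of fun c a => if a = i then X c i else 0 := by
  ext c a
  simp only [mul_apply, Em, of_apply]
  by_cases h : a = i
  · subst h
    rw [Finset.sum_eq_single a] <;> simp +contextual
  · rw [Finset.sum_eq_zero] <;> simp +contextual [h]

noncomputable def Wm (M m : ℕ) : Matrix (Fin M) (Fin M) ℂ :=
  Matrix.of fun j j' => ee M (((j' : ℕ) - (j : ℕ) : ℤ) * m)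

lemma Wm_apply (M m : ℕ) (j j' : Fin M) :
    Wm M m j j' = ee M (((j' : ℕ) - (j : ℕ) : ℤ) * m) := rfl

lemma Wm_diag (M m : ℕ) (j : Fin M) : Wm M m j j = 1 := by
  simp [Wm_apply, ee_zero]

lemma Wm_mul_Wm (M m : ℕ) : Wm M m * Wm M m = (M : ℂ) • Wm M m := by
  ext a b
  have key : ∀ c : Fin M,
      Wm M m a c * Wm M m c b = Wm M m a b := by
    intro c
    rw [Wm_apply, Wm_apply, Wm_apply, ← ee_add]
    congr 1
    ring
  simp only [mul_apply, key, Finset.sum_const, Finset.card_univ, Fintype.card_fin,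
    Matrix.smul_apply, nsmul_eq_mul, smul_eq_mul]

lemma Wm_Em_Wm (M m : ℕ) (i : Fin M) : Wm M m * Em i * Wm M m = Wm M m := by
  rw [mul_Em]
  ext a b
  simp only [mul_apply, of_apply, ite_mul, zero_mul]
  rw [Finset.sum_ite_eq' Finset.univ i fun c => Wm M m a i * Wm M m c b]
  simp only [Finset.mem_univ, if_true]
  rw [Wm_apply, Wm_apply, Wm_apply, ← ee_add]
  congr 1
  ring

lemma Em_Wm_Em (M m : ℕ) (i : Fin M) : Em i * Wm M m * Em i = Em i := by
  rw [mul_Em, Em_mul]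
  ext a b
  simp only [Em, of_apply]
  by_cases h1 : a = i <;> by_cases h2 : b = i <;> simp [h1, h2, Wm_diag]

lemma combo_mul {n : Type*} [Fintype n] [DecidableEq n] (X : Matrix n n ℂ) (s p q u v : ℂ)
    (hX : X * X = s • X) :
    (p • (1 : Matrix n n ℂ) - q • X) * (u • 1 + v • X) =
      (p * u) • 1 + (p * v - q * u - q * v * s) • X := by
  simp only [sub_mul, mul_add, smul_mul_assoc, mul_smul_comm, one_mul, mul_one, hX, smul_smul]
  module

lemma combo_sq {n : Type*} [Fintype n] [DecidableEq n] (X : Matrix n n ℂ) (s u v : ℂ)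
    (hX : X * X = s • X) :
    (u • (1 : Matrix n n ℂ) + v • X) * (u • 1 + v • X) =
      (u * u) • 1 + (2 * u * v + v * v * s) • X := by
  simp only [add_mul, mul_add, smul_mul_assoc, mul_smul_comm, one_mul, mul_one, hX, smul_smul]
  module

lemma lin_bound {M N j b : ℕ} (hj : j < M) (hb : b < N) : j * N + b < N * M := by
  have h1 : (j+1) * N ≤ M * N := Nat.mul_le_mul_right N hj
  have h2 : (j+1) * N = j*N + N := by ring
  have h3 : M * N = N * M := Nat.mul_comm M N
  omega

lemma lin_inj {N j j' b b' : ℕ} (hb : b < N) (hb' : b' < N)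
    (h : j * N + b = j' * N + b') : j = j' ∧ b = b' := by
  have hN : 0 < N := by omega
  have e1 : (j * N + b) % N = b := by
    rw [Nat.mul_comm, Nat.mul_add_mod, Nat.mod_eq_of_lt hb]
  have e2 : (j' * N + b') % N = b' := by
    rw [Nat.mul_comm, Nat.mul_add_mod, Nat.mod_eq_of_lt hb']
  have hbb : b = b' := by rw [← e1, ← e2, h]
  refine ⟨?_, hbb⟩
  have : j * N = j' * N := by omega
  exact Nat.eq_of_mul_eq_mul_right hN this

lemma FFH (M N : ℕ) (hM : 2 ≤ M) (hN : 1 ≤ N) (m : ℕ) (hm : m ≤ M - 1)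
    (α : ℝ) (hα0 : 0 ≤ α)
    (Qbar : Matrix (Fin M × Fin N)
      {k : Fin (N * M) // ∀ n : Fin N, (k : ℕ) ≠ m + (n : ℕ) * M} ℂ)
    (hQbar : ∀ (j : Fin M) (b : Fin N)
        (k : {k : Fin (N * M) // ∀ n : Fin N, (k : ℕ) ≠ m + (n : ℕ) * M}),
      Qbar (j, b) k =
        Complex.exp (-(2 * (Real.pi : ℂ) * Complex.I *
          ((((j : ℕ) * N + (b : ℕ)) * ((k : Fin (N * M)) : ℕ) : ℕ) : ℂ)) / ((N * M : ℕ) : ℂ)))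
    (F : Matrix (Fin M × Fin N)
      {k : Fin (N * M) // ∀ n : Fin N, (k : ℕ) ≠ m + (n : ℕ) * M} ℂ)
    (hF : F = ((Real.sqrt α : ℝ) : ℂ) • Qbar) :
    F * Fᴴ = ((α * (N*M) : ℝ) : ℂ) • 1
      - ((α * N : ℝ) : ℂ) • (Wm M m ⊗ₖ (1 : Matrix (Fin N) (Fin N) ℂ)) := by
  have hN0 : 0 < N := hN
  have hM0 : 0 < M := by omega
  have hNM : 0 < N * M := Nat.mul_pos hN0 hM0
  have hQ' : ∀ (j : Fin M) (b : Fin N) (k : {k : Fin (N * M) // ∀ n : Fin N, (k : ℕ) ≠ m + (n : ℕ) * M}),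
      Qbar (j, b) k = ee (N*M) (-((((j:ℕ)*N+(b:ℕ)) * (((k : Fin (N*M))):ℕ) : ℕ) : ℤ)) := by
    intro j b k
    rw [hQbar, ee]
    congr 1
    push_cast
    ring
  ext ⟨j, b⟩ ⟨j', b'⟩
  set lj : ℕ := (j:ℕ) * N + (b:ℕ) with hljdef
  set lj' : ℕ := (j':ℕ) * N + (b':ℕ) with hljdef'
  set d : ℤ := (lj' : ℤ) - (lj : ℤ) with hd
  have hljb : lj < N * M := lin_bound j.isLt b.isLt
  have hljb' : lj' < N * M := lin_bound j'.isLt b'.isLt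
  have hterm : ∀ k : {k : Fin (N * M) // ∀ n : Fin N, (k : ℕ) ≠ m + (n : ℕ) * M},
      F (j,b) k * (Fᴴ) k (j',b') = (α:ℂ) * ee (N*M) (d * (((k : Fin (N*M))):ℕ)) := by
    intro k
    rw [conjTranspose_apply, hF]
    simp only [Matrix.smul_apply, smul_eq_mul]
    rw [hQ', hQ']
    simp only [star_mul', Complex.star_def, Complex.conj_ofReal, ee_conj]
    have hs : ((Real.sqrt α : ℝ):ℂ) * ((Real.sqrt α : ℝ):ℂ) = (α:ℂ) := by
      rw [← Complex.ofReal_mul, Real.mul_self_sqrt hα0]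
    calc ((Real.sqrt α : ℝ):ℂ) * ee (N*M) (-((lj * (((k : Fin (N*M))):ℕ) : ℕ) : ℤ))
          * (((Real.sqrt α : ℝ):ℂ) * ee (N*M) (-(-((lj' * (((k : Fin (N*M))):ℕ) : ℕ) : ℤ))))
        = (α:ℂ) * (ee (N*M) (-((lj * (((k : Fin (N*M))):ℕ) : ℕ) : ℤ))
            * ee (N*M) ((lj' * (((k : Fin (N*M))):ℕ) : ℕ) : ℤ)) := by
          rw [neg_neg, ← hs]; ring
      _ = (α:ℂ) * ee (N*M) (d * (((k : Fin (N*M))):ℕ)) := by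
          rw [← ee_add]
          congr 2
          rw [hd]
          push_cast
          ring
  rw [Matrix.mul_apply]
  rw [Finset.sum_congr rfl (fun k _ => hterm k), ← Finset.mul_sum]
  rw [sum_split N M m hN hM hm (fun k => ee (N*M) (d * (k:ℕ)))]
  rw [ee_sum (N*M) hNM d]
  have hrem : (∑ n : Fin N, ee (N*M) (d * (((m + (n:ℕ) * M : ℕ)) : ℤ)))
      = ee (N*M) (d * m) * (if (N:ℤ) ∣ d then (N:ℂ) else 0) := by
    rw [← ee_sum N hN0 d, Finset.mul_sum]
    refine Finset.sum_congr rfl fun n _ => ?_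
    rw [← ee_scale N M hN0 hM0 (d * (n:ℕ)), ← ee_add]
    congr 1
    push_cast
    ring
  rw [show (∑ n : Fin N, ee (N*M) (d * (((⟨m + (n:ℕ) * M, by
        have h1 : ((n:ℕ)+1) * M ≤ N * M := Nat.mul_le_mul_right M n.isLt
        have h2 : ((n:ℕ)+1) * M = (n:ℕ)*M + M := by ring
        omega⟩ : Fin (N*M)) : ℕ) : ℤ)))
      = ee (N*M) (d * m) * (if (N:ℤ) ∣ d then (N:ℂ) else 0) from hrem]
  -- divisibility characterizations
  have hdid : d = (((j':ℕ):ℤ) - ((j:ℕ):ℤ)) * N + (((b':ℕ):ℤ) - ((b:ℕ):ℤ)) := by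
    rw [hd, hljdef, hljdef']
    push_cast
    ring
  have hNMdvd : ((N*M : ℕ):ℤ) ∣ d ↔ ((j,b) : Fin M × Fin N) = (j',b') := by
    constructor
    · intro hdvd
      have hd0 : d = 0 := by
        refine int_dvd_small (N*M) d hNM hdvd ?_ ?_ <;> (rw [hd]; push_cast; omega)
      have hll : lj = lj' := by omega
      obtain ⟨h1, h2⟩ := lin_inj b.isLt b'.isLt (hljdef ▸ hljdef' ▸ hll)
      exact Prod.ext (Fin.ext h1) (Fin.ext h2)
    · intro h
      obtain ⟨h1, h2⟩ := Prod.mk.injEq .. ▸ h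
      have : d = 0 := by rw [hd, hljdef, hljdef', h1, h2]; ring
      rw [this]
      exact dvd_zero _
  have hNdvd : ((N : ℕ):ℤ) ∣ d ↔ b = b' := by
    constructor
    · intro hdvd
      have h1 : ((N:ℕ):ℤ) ∣ (((b':ℕ):ℤ) - ((b:ℕ):ℤ)) := by
        have h2 : ((N:ℕ):ℤ) ∣ (((j':ℕ):ℤ) - ((j:ℕ):ℤ)) * N := ⟨((j':ℕ):ℤ) - ((j:ℕ):ℤ), by ring⟩
        have := dvd_sub hdvd h2
        rw [hdid] at this
        simpa using this
      have hb0 : (((b':ℕ):ℤ) - ((b:ℕ):ℤ)) = 0 := by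
        refine int_dvd_small N _ hN0 h1 ?_ ?_ <;>
          (have := b.isLt; have := b'.isLt; push_cast; omega)
      exact Fin.ext (by omega)
    · intro h
      refine ⟨((j':ℕ):ℤ) - ((j:ℕ):ℤ), ?_⟩
      rw [hdid, h]
      ring
  -- RHS entry
  have hRHS : (((α * (N*M) : ℝ) : ℂ) • (1 : Matrix (Fin M × Fin N) (Fin M × Fin N) ℂ)
      - ((α * N : ℝ) : ℂ) • (Wm M m ⊗ₖ (1 : Matrix (Fin N) (Fin N) ℂ))) (j,b) (j',b')
      = ((α * (N*M) : ℝ) : ℂ) * (if ((j,b) : Fin M × Fin N) = (j',b') then 1 else 0)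
        - ((α * N : ℝ) : ℂ) * (Wm M m j j' * (if b = b' then 1 else 0)) := by
    simp only [Matrix.sub_apply, Matrix.smul_apply, kroneckerMap_apply, smul_eq_mul, one_apply]
  rw [hRHS]
  by_cases hbb : b = b'
  · by_cases hjj : ((j,b) : Fin M × Fin N) = (j',b')
    · have hd0 : ((N*M : ℕ):ℤ) ∣ d := hNMdvd.2 hjj
      have hd0' : ((N : ℕ):ℤ) ∣ d := hNdvd.2 hbb
      have hdz : d = 0 := by
        refine int_dvd_small (N*M) d hNM hd0 ?_ ?_ <;> (rw [hd]; push_cast; omega)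
      rw [if_pos hd0, if_pos hd0', if_pos hjj, if_pos hbb, hdz]
      have hj' : j = j' := (Prod.mk.injEq .. ▸ hjj).1
      rw [← hj', Wm_diag]
      simp [ee_zero]
      push_cast
      ring
    · have hndvd : ¬ ((N*M : ℕ):ℤ) ∣ d := fun h => hjj (hNMdvd.1 h)
      have hd0' : ((N : ℕ):ℤ) ∣ d := hNdvd.2 hbb
      rw [if_neg hndvd, if_pos hd0', if_neg hjj, if_pos hbb]
      have hwm : ee (N*M) (d * m) = Wm M m j j' := by
        have hb2 : ((b':ℕ):ℤ) = ((b:ℕ):ℤ) := by rw [hbb]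
        have hd2 : d * m = ((((j':ℕ):ℤ) - ((j:ℕ):ℤ)) * m) * N := by
          rw [hdid, hb2]; ring
        rw [hd2, show N*M = M*N from Nat.mul_comm N M, ee_scale M N hM0 hN0, Wm_apply]
      rw [hwm]
      push_cast
      ring
  · have hndvd : ¬ ((N*M : ℕ):ℤ) ∣ d := by
      intro h
      exact hbb ((Prod.mk.injEq .. ▸ (hNMdvd.1 h)).2 ▸ rfl)
    have hndvd' : ¬ ((N : ℕ):ℤ) ∣ d := fun h => hbb (hNdvd.1 h)
    have hnjj : ¬ ((j,b) : Fin M × Fin N) = (j',b') := by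
      intro h
      exact hbb (congrArg Prod.snd h)
    rw [if_neg hndvd, if_neg hndvd', if_neg hnjj, if_neg hbb]
    ring

lemma WF0 (M N : ℕ) (hM : 2 ≤ M) (hN : 1 ≤ N) (m : ℕ) (hm : m ≤ M - 1)
    (α : ℝ)
    (Qbar : Matrix (Fin M × Fin N)
      {k : Fin (N * M) // ∀ n : Fin N, (k : ℕ) ≠ m + (n : ℕ) * M} ℂ)
    (hQbar : ∀ (j : Fin M) (b : Fin N)
        (k : {k : Fin (N * M) // ∀ n : Fin N, (k : ℕ) ≠ m + (n : ℕ) * M}),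
      Qbar (j, b) k =
        Complex.exp (-(2 * (Real.pi : ℂ) * Complex.I *
          ((((j : ℕ) * N + (b : ℕ)) * ((k : Fin (N * M)) : ℕ) : ℕ) : ℂ)) / ((N * M : ℕ) : ℂ)))
    (F : Matrix (Fin M × Fin N)
      {k : Fin (N * M) // ∀ n : Fin N, (k : ℕ) ≠ m + (n : ℕ) * M} ℂ)
    (hF : F = ((Real.sqrt α : ℝ) : ℂ) • Qbar) :
    (Wm M m ⊗ₖ (1 : Matrix (Fin N) (Fin N) ℂ)) * F = 0 := by
  have hN0 : 0 < N := hN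
  have hM0 : 0 < M := by omega
  have hQ' : ∀ (j : Fin M) (b : Fin N) (k : {k : Fin (N * M) // ∀ n : Fin N, (k : ℕ) ≠ m + (n : ℕ) * M}),
      Qbar (j, b) k = ee (N*M) (-((((j:ℕ)*N+(b:ℕ)) * (((k : Fin (N*M))):ℕ) : ℕ) : ℤ)) := by
    intro j b k
    rw [hQbar, ee]
    congr 1
    push_cast
    ring
  ext ⟨j, b⟩ k
  rw [Matrix.mul_apply, Fintype.sum_prod_type]
  set k' : ℕ := ((k : Fin (N*M)) : ℕ) with hk'
  have hin : ∀ c : Fin M, (∑ b' : Fin N, (Wm M m ⊗ₖ (1 : Matrix (Fin N) (Fin N) ℂ)) (j,b) (c,b') * F (c,b') k)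
      = Wm M m j c * F (c,b) k := by
    intro c
    rw [Finset.sum_eq_single b]
    · simp [kroneckerMap_apply]
    · intro b'' _ hb''
      simp [kroneckerMap_apply, one_apply, Ne.symm hb'']
    · simp
  rw [Finset.sum_congr rfl fun c _ => hin c]
  have hterm : ∀ c : Fin M, Wm M m j c * F (c,b) k
      = (((Real.sqrt α : ℝ):ℂ) * ee M (-((j:ℕ)*m : ℕ)) * ee (N*M) (-((b:ℕ)*k' : ℕ)))
        * ee M (((m:ℤ) - (k' : ℤ)) * (c:ℕ)) := by
    intro c
    rw [hF]
    simp only [Matrix.smul_apply, smul_eq_mul]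
    rw [hQ', Wm_apply]
    have hsplit : ee (N*M) (-((((c:ℕ)*N+(b:ℕ)) * k' : ℕ) : ℤ))
        = ee M (-((c:ℕ) * k' : ℤ)) * ee (N*M) (-((b:ℕ)*k' : ℕ)) := by
      rw [← ee_scale M N hM0 hN0 (-((c:ℕ) * k' : ℤ)), show M*N = N*M from Nat.mul_comm M N,
        ← ee_add]
      congr 1
      push_cast
      ring
    rw [hsplit]
    rw [show (((c:ℕ):ℤ) - ((j:ℕ):ℤ)) * m = -((j:ℕ)*m : ℕ) + ((c:ℕ)*m : ℕ) by push_cast; ring,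
      ee_add]
    rw [show ((m:ℤ) - (k':ℤ)) * (c:ℕ) = ((c:ℕ)*m : ℕ) + -((c:ℕ) * k' : ℤ) by push_cast; ring,
      ee_add]
    ring
  rw [Finset.sum_congr rfl fun c _ => hterm c, ← Finset.mul_sum]
  have hMk : ¬ ((M:ℤ) ∣ ((m:ℤ) - (k' : ℤ))) := by
    rintro ⟨c, hc⟩
    have hk1 : k' < N*M := (k : Fin (N*M)).isLt
    have hk1' : ((k':ℕ):ℤ) < ((N*M:ℕ):ℤ) := by exact_mod_cast hk1
    have hm' : (m:ℤ) < (M:ℤ) := by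
      have : m < M := by omega
      exact_mod_cast this
    have hM' : (0:ℤ) < (M:ℤ) := by exact_mod_cast hM0
    have hk0 : (0:ℤ) ≤ (k':ℤ) := by positivity
    have hm0 : (0:ℤ) ≤ (m:ℤ) := by positivity
    have hMN : ((N*M:ℕ):ℤ) = (M:ℤ) * (N:ℤ) := by push_cast; ring
    have hc0 : c ≤ 0 := by
      by_contra h
      push_neg at h
      have h1 : (M:ℤ) * 1 ≤ (M:ℤ) * c := by
        apply mul_le_mul_of_nonneg_left (by omega) (le_of_lt hM')
      linarith
    have hcN : -(N:ℤ) < c := by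
      by_contra h
      push_neg at h
      have h1 : (M:ℤ) * c ≤ (M:ℤ) * (-(N:ℤ)) := by
        apply mul_le_mul_of_nonneg_left h (le_of_lt hM')
      rw [hMN] at hk1'
      linarith
    set n : ℕ := (-c).toNat with hn
    have hnc : (n:ℤ) = -c := Int.toNat_of_nonneg (by omega)
    have hnN : n < N := by omega
    have hkeq : k' = m + n * M := by
      have h2 : ((k':ℕ):ℤ) = (m:ℤ) + (n:ℤ) * (M:ℤ) := by
        rw [hnc]
        linarith
      exact_mod_cast h2
    exact (k.2 ⟨n, hnN⟩) hkeq
  have hsum : (∑ c : Fin M, ee M (((m:ℤ) - (k' : ℤ)) * (c:ℕ))) = 0 := by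
    rw [ee_sum M hM0 ((m:ℤ) - (k':ℤ))]
    simp [hMk]
  rw [hsum, mul_zero]
  simp

lemma sSel_mul {M N : ℕ} {n : Type*} [Fintype n] (i : Fin M) (X : Matrix (Fin M × Fin N) n ℂ) :
    sSel M N i * X = Matrix.of fun b c => X (i, b) c := by
  ext b c
  rw [mul_apply, Finset.sum_eq_single ((i, b) : Fin M × Fin N)]
  · simp [sSel]
  · rintro ⟨j, c'⟩ _ hne
    have : ¬(j = i ∧ c' = b) := by
      rintro ⟨rfl, rfl⟩; exact hne rfl
    simp [sSel, this]
  · simp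

lemma mul_sSelT {M N : ℕ} {n : Type*} [Fintype n] (i : Fin M) (X : Matrix n (Fin M × Fin N) ℂ) :
    X * (sSel M N i)ᵀ = Matrix.of fun c b => X c (i, b) := by
  ext c b
  rw [mul_apply, Finset.sum_eq_single ((i, b) : Fin M × Fin N)]
  · simp [sSel]
  · rintro ⟨j, c'⟩ _ hne
    have : ¬(j = i ∧ c' = b) := by
      rintro ⟨rfl, rfl⟩; exact hne rfl
    simp [sSel, transpose_apply, this]
  · simp

lemma sSelT_mul_sSel {M N : ℕ} (i : Fin M) :
    (sSel M N i)ᵀ * sSel M N i = Em i ⊗ₖ (1 : Matrix (Fin N) (Fin N) ℂ) := by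
  ext ⟨j, c⟩ ⟨j', c'⟩
  rw [mul_apply]
  simp only [transpose_apply, sSel, of_apply, Em, kroneckerMap_apply, one_apply]
  rw [Finset.sum_eq_single c]
  · by_cases h1 : j = i <;> by_cases h2 : j' = i <;> by_cases h3 : c = c' <;>
      simp [h1, h2, h3, eq_comm]
  · intro b _ hb
    have : ¬(j = i ∧ c = b) := fun ⟨_, h⟩ => hb h.symm
    simp [this]
  · simp

lemma sum_kron {ι : Type*} (s : Finset ι) {m n p q : Type*}
    (X : ι → Matrix m n ℂ) (B : Matrix p q ℂ) :
    (∑ i ∈ s, X i) ⊗ₖ B = ∑ i ∈ s, (X i ⊗ₖ B) := by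
  ext ⟨a, c⟩ ⟨b, d⟩
  simp [kroneckerMap_apply, Matrix.sum_apply, Finset.sum_mul]

lemma sandwich {M N : ℕ} (R : Matrix (Fin (M-1)) (Fin M) ℂ) (x y : ℂ)
    (W : Matrix (Fin M) (Fin M) ℂ) (hRR : R * Rᵀ = 1) :
    (R ⊗ₖ (1 : Matrix (Fin N) (Fin N) ℂ)) * (x • (1 : Matrix (Fin M × Fin N) (Fin M × Fin N) ℂ) - y • (W ⊗ₖ (1 : Matrix (Fin N) (Fin N) ℂ))) *
        (Rᵀ ⊗ₖ (1 : Matrix (Fin N) (Fin N) ℂ))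
      = x • 1 - y • ((R * W * Rᵀ) ⊗ₖ 1) := by
  rw [Matrix.mul_sub, Matrix.sub_mul]
  congr 1
  · rw [Matrix.mul_smul, Matrix.mul_one, Matrix.smul_mul, ← mul_kronecker_mul, hRR, one_mul,
      one_kronecker_one]
  · rw [Matrix.mul_smul, Matrix.smul_mul, ← mul_kronecker_mul, ← mul_kronecker_mul, one_mul, one_mul]

lemma sandwichT {M N : ℕ} (R : Matrix (Fin (M-1)) (Fin M) ℂ) (x y : ℂ)
    (X : Matrix (Fin (M-1)) (Fin (M-1)) ℂ) :
    (Rᵀ ⊗ₖ (1 : Matrix (Fin N) (Fin N) ℂ)) * (x • (1 : Matrix (Fin (M-1) × Fin N) (Fin (M-1) × Fin N) ℂ) + y • (X ⊗ₖ (1 : Matrix (Fin N) (Fin N) ℂ))) *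
        (R ⊗ₖ (1 : Matrix (Fin N) (Fin N) ℂ))
      = x • ((Rᵀ * R) ⊗ₖ 1) + y • ((Rᵀ * X * R) ⊗ₖ 1) := by
  rw [Matrix.mul_add, Matrix.add_mul]
  congr 1
  · rw [Matrix.mul_smul, Matrix.mul_one, Matrix.smul_mul, ← mul_kronecker_mul, one_mul]
  · rw [Matrix.mul_smul, Matrix.smul_mul, ← mul_kronecker_mul, ← mul_kronecker_mul, one_mul, one_mul]

lemma sum_Dm (M m : ℕ) :
    ∑ i : Fin M, ((1 : Matrix (Fin M) (Fin M) ℂ) - Em i) = ((M:ℂ) - 1) • 1 := by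
  rw [Finset.sum_sub_distrib, sum_Em, Finset.sum_const, Finset.card_univ, Fintype.card_fin]
  rw [← Nat.cast_smul_eq_nsmul ℂ M (1 : Matrix (Fin M) (Fin M) ℂ)]
  module

lemma sum_DWD (M m : ℕ) :
    ∑ i : Fin M, (((1 : Matrix (Fin M) (Fin M) ℂ) - Em i) * Wm M m * (1 - Em i))
      = ((M:ℂ) - 2) • Wm M m + 1 := by
  have expand : ∀ i : Fin M, ((1 : Matrix (Fin M) (Fin M) ℂ) - Em i) * Wm M m * (1 - Em i)
      = Wm M m - Em i * Wm M m - Wm M m * Em i + Em i * Wm M m * Em i := by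
    intro i; noncomm_ring
  rw [Finset.sum_congr rfl fun i _ => expand i]
  rw [Finset.sum_add_distrib, Finset.sum_sub_distrib, Finset.sum_sub_distrib]
  rw [Finset.sum_congr rfl fun i _ => Em_Wm_Em M m i, sum_Em]
  rw [← Finset.sum_mul, ← Finset.mul_sum, sum_Em, one_mul, mul_one]
  rw [Finset.sum_const, Finset.card_univ, Fintype.card_fin,
    ← Nat.cast_smul_eq_nsmul ℂ M (Wm M m)]
  module

lemma scalar_key (A B x : ℝ) (hA : 1 ≤ A) (hB : 2 ≤ B) (hx : 0 < x)
    (β μ : ℝ)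
    (hβ : β = (2 * A * x * (1 + A * x) + A ^ 2 * x ^ 2 * (B - 1)) / (1 + A * x) ^ 2)
    (hμ : μ = A * (B - 1 + β) / (1 + A * B * x) ^ 2) :
    μ = A * ((1 + x * (A * B))⁻¹ * (1 + x * (A * B))⁻¹ * (B - 1)
        + (2 * (1 + x * (A * B))⁻¹ * ((x * A) * ((1 + x * (A * B)) * (1 + x * A))⁻¹)
          + ((x * A) * ((1 + x * (A * B)) * (1 + x * A))⁻¹)
            * ((x * A) * ((1 + x * (A * B)) * (1 + x * A))⁻¹) * (B - 1))) := by
  have hA0 : (0:ℝ) < A := by linarith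
  have hB0 : (0:ℝ) < B := by linarith
  have hxA : (0:ℝ) < x * A := mul_pos hx hA0
  have hxAB : (0:ℝ) < x * (A * B) := mul_pos hx (mul_pos hA0 hB0)
  rw [hμ, hβ]
  have h1' : (1:ℝ) + A * x ≠ 0 := by nlinarith
  have h2' : (1:ℝ) + A * B * x ≠ 0 := by nlinarith
  have h2'' : (1:ℝ) + x * (A * B) ≠ 0 := by nlinarith
  field_simp

noncomputable def Vm (M m : ℕ) (i : Fin M) : Matrix (Fin (M-1)) (Fin (M-1)) ℂ :=
  rowRemoved M i * Wm M m * (rowRemoved M i)ᵀ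

lemma Vm_eq (M m : ℕ) (i : Fin M) :
    Vm M m i = rowRemoved M i * Wm M m * (rowRemoved M i)ᵀ := rfl

lemma Vm_sq (M m : ℕ) (i : Fin M) :
    Vm M m i * Vm M m i = ((M:ℂ) - 1) • Vm M m i := by
  rw [Vm_eq]
  have h1 : (rowRemoved M i * Wm M m * (rowRemoved M i)ᵀ) *
      (rowRemoved M i * Wm M m * (rowRemoved M i)ᵀ)
      = rowRemoved M i * (Wm M m * ((rowRemoved M i)ᵀ * rowRemoved M i) * Wm M m) *
        (rowRemoved M i)ᵀ := by
    simp only [Matrix.mul_assoc]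
  rw [h1, Rt_mul_R]
  have h2 : Wm M m * ((1 : Matrix (Fin M) (Fin M) ℂ) - Em i) * Wm M m
      = ((M:ℂ) - 1) • Wm M m := by
    rw [Matrix.mul_sub, Matrix.mul_one, Matrix.sub_mul, Wm_mul_Wm, Wm_Em_Wm]
    module
  rw [h2, Matrix.mul_smul, Matrix.smul_mul]

set_option maxHeartbeats 1000000 in
/-- Theorem 1, KKT conditions: with `α = KP/(N²(M−1))` and
`F̄ = √α·Q̄_m`, (i) `Tr(S_i F̄ F̄ᴴ S_iᵀ) = KP` for every `i`, and (ii) with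
`μ = N(M−1+β)/(1+NMα)² > 0`, `β = (2Nα(1+Nα)+N²α²(M−1))/(1+Nα)²`, one has
`−2N·Σ_i S̄_(i)ᵀ (I + S̄_(i) F̄ F̄ᴴ S̄_(i)ᵀ)⁻² S̄_(i) F̄ + 2μ·Σ_i S_iᵀ S_i F̄ = 0`. -/
theorem stmt_5 (M N : ℕ) (hM : 2 ≤ M) (hN : 1 ≤ N) (m : ℕ) (hm : m ≤ M - 1)
    (K P : ℝ) (hK : 0 < K) (hP : 0 < P)
    (α : ℝ) (hα : α = K * P / ((N : ℝ) ^ 2 * ((M : ℝ) - 1)))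
    (Qbar : Matrix (Fin M × Fin N)
      {k : Fin (N * M) // ∀ n : Fin N, (k : ℕ) ≠ m + (n : ℕ) * M} ℂ)
    (hQbar : ∀ (j : Fin M) (b : Fin N)
        (k : {k : Fin (N * M) // ∀ n : Fin N, (k : ℕ) ≠ m + (n : ℕ) * M}),
      Qbar (j, b) k =
        Complex.exp (-(2 * (Real.pi : ℂ) * Complex.I *
          ((((j : ℕ) * N + (b : ℕ)) * ((k : Fin (N * M)) : ℕ) : ℕ) : ℂ)) / ((N * M : ℕ) : ℂ)))
    (F : Matrix (Fin M × Fin N)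
      {k : Fin (N * M) // ∀ n : Fin N, (k : ℕ) ≠ m + (n : ℕ) * M} ℂ)
    (hF : F = ((Real.sqrt α : ℝ) : ℂ) • Qbar)
    (β : ℝ)
    (hβ : β = (2 * N * α * (1 + N * α) + (N : ℝ) ^ 2 * α ^ 2 * ((M : ℝ) - 1)) /
      (1 + (N : ℝ) * α) ^ 2)
    (μ : ℝ)
    (hμ : μ = (N : ℝ) * ((M : ℝ) - 1 + β) / (1 + (N : ℝ) * (M : ℝ) * α) ^ 2) :
    (∀ i : Fin M,
        (sSel M N i * F * Fᴴ * (sSel M N i)ᵀ).trace = ((K * P : ℝ) : ℂ)) ∧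
      0 < μ ∧
      (-(2 * (N : ℂ))) •
          (∑ i : Fin M,
            (sBar M N i)ᵀ *
              (((1 : Matrix (Fin (M - 1) × Fin N) (Fin (M - 1) × Fin N) ℂ) +
                  sBar M N i * F * Fᴴ * (sBar M N i)ᵀ)⁻¹ *
                ((1 : Matrix (Fin (M - 1) × Fin N) (Fin (M - 1) × Fin N) ℂ) +
                  sBar M N i * F * Fᴴ * (sBar M N i)ᵀ)⁻¹) * sBar M N i * F) +
        ((2 * μ : ℝ) : ℂ) • (∑ i : Fin M, (sSel M N i)ᵀ * sSel M N i * F) = 0 := by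
  have hNR : (1:ℝ) ≤ (N:ℝ) := by exact_mod_cast hN
  have hMR : (2:ℝ) ≤ (M:ℝ) := by exact_mod_cast hM
  have hM1 : (0:ℝ) < (M:ℝ) - 1 := by linarith
  have hN0R : (0:ℝ) < (N:ℝ) := by linarith
  have hM0R : (0:ℝ) < (M:ℝ) := by linarith
  have hα0 : 0 < α := by
    rw [hα]
    exact div_pos (mul_pos hK hP) (mul_pos (pow_pos hN0R 2) hM1)
  have hG := FFH M N hM hN m hm α hα0.le Qbar hQbar F hF
  have hZ := WF0 M N hM hN m hm α Qbar hQbar F hF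
  -- part (i)
  have part1 : ∀ i : Fin M,
      (sSel M N i * F * Fᴴ * (sSel M N i)ᵀ).trace = ((K * P : ℝ) : ℂ) := by
    intro i
    rw [Matrix.mul_assoc (sSel M N i) F Fᴴ, hG, sSel_mul, mul_sSelT]
    have hentry : ∀ b : Fin N,
        ((((α * (N*M) : ℝ) : ℂ) • (1 : Matrix (Fin M × Fin N) (Fin M × Fin N) ℂ)
          - ((α * N : ℝ) : ℂ) • (Wm M m ⊗ₖ (1 : Matrix (Fin N) (Fin N) ℂ)))) (i, b) (i, b)
        = ((α * (N*M) - α * N : ℝ) : ℂ) := by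
      intro b
      simp only [Matrix.sub_apply, Matrix.smul_apply, one_apply, kroneckerMap_apply, Wm_diag, smul_eq_mul,
        if_pos rfl]
      push_cast
      ring
    rw [Matrix.trace]
    simp only [Matrix.diag_apply, of_apply, hentry]
    rw [Finset.sum_const, Finset.card_univ, Fintype.card_fin, nsmul_eq_mul]
    have hreal : (N:ℝ) * (α * ((N:ℝ)*(M:ℝ)) - α * (N:ℝ)) = K * P := by
      rw [hα]
      field_simp
    push_cast
    exact_mod_cast hreal
  refine ⟨part1, ?_, ?_⟩
  · -- 0 < μ
    have hβ0 : 0 ≤ β := by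
      rw [hβ]
      apply div_nonneg _ (by positivity)
      have t1 : (0:ℝ) < (N:ℝ) * α := mul_pos hN0R hα0
      have t2 : (0:ℝ) ≤ (N:ℝ)^2 * α^2 * ((M:ℝ) - 1) :=
        mul_nonneg (by positivity) hM1.le
      nlinarith
    rw [hμ]
    apply div_pos (mul_pos hN0R (by linarith))
    have h2 : (0:ℝ) < (N:ℝ)*(M:ℝ)*α := mul_pos (mul_pos hN0R hM0R) hα0
    positivity
  -- main identity
  have hp1 : (0:ℝ) < 1 + α * ((N:ℝ)*(M:ℝ)) := by
    have := mul_pos hα0 (mul_pos hN0R hM0R); linarith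
  have hp2 : (0:ℝ) < 1 + α * (N:ℝ) := by
    have := mul_pos hα0 hN0R; linarith
  set u : ℝ := (1 + α * ((N:ℝ)*(M:ℝ)))⁻¹ with hu
  set v : ℝ := (α * (N:ℝ)) * ((1 + α * ((N:ℝ)*(M:ℝ))) * (1 + α * (N:ℝ)))⁻¹ with hv
  have hsT : ∀ i : Fin M, (sBar M N i)ᵀ
      = (rowRemoved M i)ᵀ ⊗ₖ (1 : Matrix (Fin N) (Fin N) ℂ) := by
    intro i
    show (rowRemoved M i ⊗ₖ (1 : Matrix (Fin N) (Fin N) ℂ))ᵀ = _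
    rw [← kroneckerMap_transpose, transpose_one]
  have hA : ∀ i : Fin M,
      ((1 : Matrix (Fin (M - 1) × Fin N) (Fin (M - 1) × Fin N) ℂ) +
        sBar M N i * F * Fᴴ * (sBar M N i)ᵀ)
      = ((1 + α * (N*M) : ℝ) : ℂ) • 1 - ((α * N : ℝ) : ℂ) • (Vm M m i ⊗ₖ 1) := by
    intro i
    rw [Matrix.mul_assoc (sBar M N i) F Fᴴ, hG, hsT i,
      show sBar M N i = rowRemoved M i ⊗ₖ (1 : Matrix (Fin N) (Fin N) ℂ) from rfl,
      sandwich (rowRemoved M i) _ _ _ (R_mul_Rt i), ← Vm_eq]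
    have hc : ((1 + α * (N*M) : ℝ) : ℂ) = 1 + ((α * (N*M) : ℝ) : ℂ) := by push_cast; ring
    rw [hc]
    module
  have hXX : ∀ i : Fin M, (Vm M m i ⊗ₖ (1 : Matrix (Fin N) (Fin N) ℂ)) * (Vm M m i ⊗ₖ 1)
      = ((M:ℂ) - 1) • (Vm M m i ⊗ₖ 1) := by
    intro i
    rw [← mul_kronecker_mul, Matrix.one_mul, Vm_sq, smul_kronecker]
  have hc1 : ((1 + α * (N*M) : ℝ) : ℂ) * ((u : ℝ) : ℂ) = 1 := by
    have h : ((1 + α * ((N:ℝ)*(M:ℝ))) * u : ℝ) = 1 := by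
      rw [hu]; exact mul_inv_cancel₀ hp1.ne'
    exact_mod_cast h
  have hrv : (1 + α * ((N:ℝ)*(M:ℝ))) * v - (α * (N:ℝ)) * u - (α * (N:ℝ)) * v * ((M:ℝ) - 1)
      = 0 := by
    rw [hu, hv]
    field_simp
    ring
  have hc2 : ((1 + α * (N*M) : ℝ) : ℂ) * ((v : ℝ) : ℂ) - ((α * N : ℝ) : ℂ) * ((u : ℝ) : ℂ)
      - ((α * N : ℝ) : ℂ) * ((v : ℝ) : ℂ) * ((M:ℂ) - 1) = 0 := by
    have h2 : (((1 + α * ((N:ℝ)*(M:ℝ))) * v - (α * (N:ℝ)) * u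
        - (α * (N:ℝ)) * v * ((M:ℝ) - 1) : ℝ) : ℂ) = 0 := by
      rw [hrv]; simp
    push_cast at h2 ⊢
    linear_combination h2
  have hAinv : ∀ i : Fin M,
      ((1 : Matrix (Fin (M - 1) × Fin N) (Fin (M - 1) × Fin N) ℂ) +
        sBar M N i * F * Fᴴ * (sBar M N i)ᵀ)⁻¹
      = ((u : ℝ) : ℂ) • 1 + ((v : ℝ) : ℂ) • (Vm M m i ⊗ₖ 1) := by
    intro i
    rw [hA i]
    apply Matrix.inv_eq_right_inv
    rw [combo_mul _ _ _ _ _ _ (hXX i), hc1, hc2, one_smul, zero_smul, add_zero]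
  have hAinv2 : ∀ i : Fin M,
      (((1 : Matrix (Fin (M - 1) × Fin N) (Fin (M - 1) × Fin N) ℂ) +
          sBar M N i * F * Fᴴ * (sBar M N i)ᵀ)⁻¹ *
        ((1 : Matrix (Fin (M - 1) × Fin N) (Fin (M - 1) × Fin N) ℂ) +
          sBar M N i * F * Fᴴ * (sBar M N i)ᵀ)⁻¹)
      = (((u : ℝ) : ℂ) * ((u : ℝ) : ℂ)) • 1
        + (2 * ((u : ℝ) : ℂ) * ((v : ℝ) : ℂ)
            + ((v : ℝ) : ℂ) * ((v : ℝ) : ℂ) * ((M:ℂ) - 1)) • (Vm M m i ⊗ₖ 1) := by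
    intro i
    rw [hAinv i, combo_sq _ _ _ _ (hXX i)]
  have hDWD : ∀ i : Fin M, (rowRemoved M i)ᵀ * Vm M m i * rowRemoved M i
      = ((1 : Matrix (Fin M) (Fin M) ℂ) - Em i) * Wm M m * (1 - Em i) := by
    intro i
    rw [Vm_eq, ← Rt_mul_R i]
    simp only [Matrix.mul_assoc]
  have hPer : ∀ i : Fin M,
      (sBar M N i)ᵀ *
        (((1 : Matrix (Fin (M - 1) × Fin N) (Fin (M - 1) × Fin N) ℂ) +
            sBar M N i * F * Fᴴ * (sBar M N i)ᵀ)⁻¹ *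
          ((1 : Matrix (Fin (M - 1) × Fin N) (Fin (M - 1) × Fin N) ℂ) +
            sBar M N i * F * Fᴴ * (sBar M N i)ᵀ)⁻¹) * sBar M N i * F
      = (((u : ℝ) : ℂ) * ((u : ℝ) : ℂ)) •
          ((((1 : Matrix (Fin M) (Fin M) ℂ) - Em i) ⊗ₖ (1 : Matrix (Fin N) (Fin N) ℂ)) * F)
        + (2 * ((u : ℝ) : ℂ) * ((v : ℝ) : ℂ)
            + ((v : ℝ) : ℂ) * ((v : ℝ) : ℂ) * ((M:ℂ) - 1)) •
          (((((1 : Matrix (Fin M) (Fin M) ℂ) - Em i) * Wm M m * (1 - Em i))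
              ⊗ₖ (1 : Matrix (Fin N) (Fin N) ℂ)) * F) := by
    intro i
    rw [hAinv2 i, hsT i,
      show sBar M N i = rowRemoved M i ⊗ₖ (1 : Matrix (Fin N) (Fin N) ℂ) from rfl,
      sandwichT (rowRemoved M i) _ _ (Vm M m i), Rt_mul_R i, hDWD i]
    rw [Matrix.add_mul, Matrix.smul_mul, Matrix.smul_mul]
  have hsum1 : (∑ i : Fin M,
      (sBar M N i)ᵀ *
        (((1 : Matrix (Fin (M - 1) × Fin N) (Fin (M - 1) × Fin N) ℂ) +
            sBar M N i * F * Fᴴ * (sBar M N i)ᵀ)⁻¹ *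
          ((1 : Matrix (Fin (M - 1) × Fin N) (Fin (M - 1) × Fin N) ℂ) +
            sBar M N i * F * Fᴴ * (sBar M N i)ᵀ)⁻¹) * sBar M N i * F)
      = ((((u : ℝ) : ℂ) * ((u : ℝ) : ℂ)) * ((M:ℂ) - 1)
          + (2 * ((u : ℝ) : ℂ) * ((v : ℝ) : ℂ)
            + ((v : ℝ) : ℂ) * ((v : ℝ) : ℂ) * ((M:ℂ) - 1))) • F := by
    rw [Finset.sum_congr rfl fun i _ => hPer i]
    rw [Finset.sum_add_distrib, ← Finset.smul_sum, ← Finset.smul_sum,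
      ← Matrix.sum_mul, ← Matrix.sum_mul, ← sum_kron, ← sum_kron, sum_Dm M m, sum_DWD M m]
    rw [smul_kronecker, one_kronecker_one, add_kronecker, smul_kronecker, one_kronecker_one]
    rw [Matrix.smul_mul, Matrix.one_mul, Matrix.add_mul, Matrix.smul_mul, hZ, smul_zero,
      zero_add, Matrix.one_mul]
    rw [smul_smul, ← add_smul]
  have hsum2 : (∑ i : Fin M, (sSel M N i)ᵀ * sSel M N i * F) = F := by
    calc (∑ i : Fin M, (sSel M N i)ᵀ * sSel M N i * F)
        = (∑ i : Fin M, (sSel M N i)ᵀ * sSel M N i) * F := by rw [Matrix.sum_mul]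
      _ = ((∑ i : Fin M, Em i) ⊗ₖ (1 : Matrix (Fin N) (Fin N) ℂ)) * F := by
          rw [Finset.sum_congr rfl fun i _ => sSelT_mul_sSel i, sum_kron]
      _ = F := by rw [sum_Em, one_kronecker_one, Matrix.one_mul]
  rw [hsum1, hsum2, smul_smul, ← add_smul]
  have hkey := scalar_key (N:ℝ) (M:ℝ) α hNR hMR hα0 β μ hβ hμ
  have hkeyC : ((μ : ℝ) : ℂ) = (N:ℂ) * ((((u : ℝ) : ℂ) * ((u : ℝ) : ℂ)) * ((M:ℂ) - 1)
        + (2 * ((u : ℝ) : ℂ) * ((v : ℝ) : ℂ)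
            + ((v : ℝ) : ℂ) * ((v : ℝ) : ℂ) * ((M:ℂ) - 1))) := by
    rw [hkey, hu, hv]
    push_cast
    ring
  have hco : (-(2 * (N : ℂ))) * ((((u : ℝ) : ℂ) * ((u : ℝ) : ℂ)) * ((M:ℂ) - 1)
        + (2 * ((u : ℝ) : ℂ) * ((v : ℝ) : ℂ)
            + ((v : ℝ) : ℂ) * ((v : ℝ) : ℂ) * ((M:ℂ) - 1))) + ((2 * μ : ℝ) : ℂ) = 0 := by
    have h2 : ((2 * μ : ℝ) : ℂ) = 2 * ((μ : ℝ) : ℂ) := by push_cast; ring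
    rw [h2, hkeyC]
    ring
  rw [hco, zero_smul]
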